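/- Let a, c ∈ ℂ with Re a > 0 and Re(c−a) > 0, and let z ∈ ℂ. Then the integral ∫₁^∞ e^{z/t} t^{−c} (t−1)^{c−a−1} dt (integrand defined via principal branches for t > 1) converges and equals ∑_{n=0}^∞ Γ(a+n) Γ(c−a) z^n / (Γ(c+n) n!); in particular, when c ∉ {0,−1,−2,…} it equals (Γ(a)Γ(c−a)/Γ(c)) · F(a;c;z). -/

import Mathlib

open Complex MeasureTheory

lemma gamma_pochhammer (s : ℂ) (hs : ∀ k : ℕ, s + k ≠ 0) (n : ℕ) :
    Complex.Gamma (s + n) = (ascPochhammer ℂ n).eval s * Complex.Gamma s := by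
  induction n with
  | zero => simp
  | succ n ih =>
    have h : s + ((n : ℂ) + 1) = (s + n) + 1 := by ring
    push_cast
    rw [h, Complex.Gamma_add_one _ (hs n), ih, ascPochhammer_succ_eval]
    ring

lemma pochhammer_ne_zero (s : ℂ) (hs : ∀ k : ℕ, s + k ≠ 0) (n : ℕ) :
    (ascPochhammer ℂ n).eval s ≠ 0 := by
  induction n with
  | zero => simp
  | succ n ih => rw [ascPochhammer_succ_eval]; exact mul_ne_zero ih (hs n)

lemma image_inv_Ioo : (fun u : ℝ => u⁻¹) '' Set.Ioo 0 1 = Set.Ioi 1 := by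
  ext x
  simp only [Set.mem_image, Set.mem_Ioo, Set.mem_Ioi]
  constructor
  · rintro ⟨u, ⟨h0, h1⟩, rfl⟩
    exact one_lt_inv_iff₀.2 ⟨h0, h1⟩
  · intro hx
    have hx0 : 0 < x := lt_trans one_pos hx
    exact ⟨x⁻¹, ⟨inv_pos.2 hx0, inv_lt_one_of_one_lt₀ hx⟩, inv_inv x⟩

lemma euler_integral (a c z : ℂ) (ha : 0 < a.re) (hca : 0 < (c - a).re) :
    IntegrableOn (fun u : ℝ =>
      Complex.exp (z * u) * ((u:ℂ) ^ (a - 1) * (1 - (u:ℂ)) ^ (c - a - 1))) (Set.Ioo 0 1) ∧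
    (∫ u in Set.Ioo (0:ℝ) 1,
        Complex.exp (z * u) * ((u:ℂ) ^ (a - 1) * (1 - (u:ℂ)) ^ (c - a - 1)))
      = ∑' n : ℕ, Complex.Gamma (a + n) * Complex.Gamma (c - a) * z ^ n /
          (Complex.Gamma (c + n) * (n.factorial : ℂ)) := by
  have hc : 0 < c.re := by have h := hca; rw [sub_re] at h; linarith
  set G : ℝ → ℂ := fun u => (u:ℂ) ^ (a - 1) * (1 - (u:ℂ)) ^ (c - a - 1) with hGdef
  have hG : IntegrableOn G (Set.Ioo 0 1) :=
    (intervalIntegrable_iff_integrableOn_Ioo_of_le zero_le_one).1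
      (Complex.betaIntegral_convergent ha hca)
  have hGn : ∀ n : ℕ, IntegrableOn
      (fun u : ℝ => (u:ℂ) ^ (a + n - 1) * (1 - (u:ℂ)) ^ (c - a - 1)) (Set.Ioo 0 1) := by
    intro n
    have hre : 0 < (a + (n:ℂ)).re := by
      rw [add_re, natCast_re]; positivity
    exact (intervalIntegrable_iff_integrableOn_Ioo_of_le zero_le_one).1
      (Complex.betaIntegral_convergent hre hca)
  set F : ℕ → ℝ → ℂ := fun n u =>
    z ^ n / n.factorial * ((u:ℂ) ^ (a + n - 1) * (1 - (u:ℂ)) ^ (c - a - 1)) with hFdef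
  have hFint : ∀ n : ℕ, Integrable (F n) (volume.restrict (Set.Ioo 0 1)) := fun n =>
    (hGn n).const_mul _
  have hnormF : ∀ (n : ℕ), ∀ u ∈ Set.Ioo (0:ℝ) 1, ‖F n u‖ ≤ ‖z‖ ^ n / n.factorial * ‖G u‖ := by
    intro n u hu
    obtain ⟨hu0, hu1⟩ := hu
    have h1 : ‖F n u‖ = ‖z‖ ^ n / n.factorial *
        (‖(u:ℂ) ^ (a + n - 1)‖ * ‖(1 - (u:ℂ)) ^ (c - a - 1)‖) := by
      simp [hFdef, norm_mul, norm_div, norm_pow]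
    have h2 : ‖(u:ℂ) ^ (a + n - 1)‖ = u ^ ((a + n - 1).re) := by
      rw [Complex.norm_cpow_eq_rpow_re_of_pos hu0]
    have h3 : ‖(u:ℂ) ^ (a - 1)‖ = u ^ ((a - 1).re) := by
      rw [Complex.norm_cpow_eq_rpow_re_of_pos hu0]
    have h4 : u ^ ((a + n - 1).re) ≤ u ^ ((a - 1).re) := by
      apply Real.rpow_le_rpow_of_exponent_ge hu0 hu1.le
      simp only [sub_re, add_re, natCast_re, one_re]
      have : (0:ℝ) ≤ n := n.cast_nonneg
      linarith
    rw [h1, hGdef]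
    simp only [norm_mul]
    rw [h3]
    have hnn : (0:ℝ) ≤ ‖z‖ ^ n / n.factorial := by positivity
    apply mul_le_mul_of_nonneg_left _ hnn
    apply mul_le_mul_of_nonneg_right _ (norm_nonneg _)
    rw [h2]; exact h4
  have hsum : Summable (fun n : ℕ => ∫ u in Set.Ioo (0:ℝ) 1, ‖F n u‖) := by
    apply Summable.of_nonneg_of_le
      (fun n => integral_nonneg (fun u => norm_nonneg _))
      (fun n => ?_)
      (((Real.summable_pow_div_factorial ‖z‖)).mul_right (∫ u in Set.Ioo (0:ℝ) 1, ‖G u‖))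
    calc ∫ u in Set.Ioo (0:ℝ) 1, ‖F n u‖
        ≤ ∫ u in Set.Ioo (0:ℝ) 1, ‖z‖ ^ n / n.factorial * ‖G u‖ := by
          apply setIntegral_mono_on (hFint n).norm (hG.norm.const_mul _)
            measurableSet_Ioo (hnormF n)
      _ = ‖z‖ ^ n / n.factorial * ∫ u in Set.Ioo (0:ℝ) 1, ‖G u‖ := by
          rw [integral_const_mul]
  have htsum_eq : ∀ u ∈ Set.Ioo (0:ℝ) 1,
      ∑' n, F n u = Complex.exp (z * u) * G u := by
    intro u hu
    have hu_ne : (u:ℂ) ≠ 0 := by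
      exact_mod_cast ne_of_gt hu.1
    rw [Complex.exp_eq_exp_ℂ, NormedSpace.exp_eq_tsum_div, ← tsum_mul_right]
    apply tsum_congr
    intro n
    have he : a + (n:ℂ) - 1 = (n:ℂ) + (a - 1) := by ring
    simp only [hFdef, hGdef]
    rw [he, Complex.cpow_add _ _ hu_ne, Complex.cpow_natCast]
    simp only [mul_pow]
    ring
  constructor
  · apply Integrable.mono' (hG.norm.const_mul (Real.exp ‖z‖))
    · exact ((Complex.continuous_exp.comp
        (continuous_const.mul Complex.continuous_ofReal)).aestronglyMeasurable).mul hG.1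
    · rw [ae_restrict_iff' measurableSet_Ioo]
      filter_upwards with u hu
      have h1 : ‖Complex.exp (z * u)‖ ≤ Real.exp ‖z‖ := by
        rw [Complex.norm_exp]
        apply Real.exp_le_exp.2
        calc (z * u).re ≤ |(z * u).re| := le_abs_self _
          _ ≤ ‖z * u‖ := Complex.abs_re_le_norm _
          _ = ‖z‖ * ‖(u:ℂ)‖ := by rw [norm_mul]
          _ ≤ ‖z‖ * 1 := by
              apply mul_le_mul_of_nonneg_left _ (norm_nonneg z)
              rw [show ‖(u:ℂ)‖ = |u| by simp]
              rw [abs_of_pos hu.1]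
              exact hu.2.le
          _ = ‖z‖ := mul_one _
      rw [norm_mul]
      exact mul_le_mul_of_nonneg_right h1 (norm_nonneg _)
  · have hswap := integral_tsum_of_summable_integral_norm hFint hsum
    have hcongr : ∫ u in Set.Ioo (0:ℝ) 1,
        Complex.exp (z * u) * ((u:ℂ) ^ (a - 1) * (1 - (u:ℂ)) ^ (c - a - 1))
        = ∫ u in Set.Ioo (0:ℝ) 1, ∑' n, F n u := by
      apply setIntegral_congr_fun measurableSet_Ioo
      intro u hu
      exact (htsum_eq u hu).symm
    rw [hcongr, ← hswap]
    apply tsum_congr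
    intro n
    have hre : 0 < (a + (n:ℂ)).re := by rw [add_re, natCast_re]; positivity
    have hrecn : 0 < (c + (n:ℂ)).re := by rw [add_re, natCast_re]; positivity
    have hβ : Complex.betaIntegral (a + n) (c - a)
        = Complex.Gamma (a + n) * Complex.Gamma (c - a) / Complex.Gamma (c + n) := by
      have h := Complex.Gamma_mul_Gamma_eq_betaIntegral hre hca
      have he : a + (n:ℂ) + (c - a) = c + n := by ring
      rw [he] at h
      rw [eq_div_iff (Complex.Gamma_ne_zero_of_re_pos hrecn), h]
      ring
    have hint : (∫ u in Set.Ioo (0:ℝ) 1,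
        (u:ℂ) ^ (a + n - 1) * (1 - (u:ℂ)) ^ (c - a - 1))
        = Complex.betaIntegral (a + n) (c - a) := by
      rw [Complex.betaIntegral, intervalIntegral.integral_of_le zero_le_one,
        integral_Ioc_eq_integral_Ioo]
    simp only [hFdef]
    rw [integral_const_mul, hint, hβ]
    have hfac : ((n.factorial : ℂ)) ≠ 0 := by exact_mod_cast n.factorial_ne_zero
    field_simp

lemma subst_pointwise (a c z : ℂ) (u : ℝ) (hu : u ∈ Set.Ioo (0:ℝ) 1) :
    |(-(u^2)⁻¹)| • (Complex.exp (z / (u⁻¹:ℝ)) * ((u⁻¹:ℝ):ℂ) ^ (-c) *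
        (((u⁻¹:ℝ):ℂ) - 1) ^ (c - a - 1))
      = Complex.exp (z * u) * ((u:ℂ) ^ (a - 1) * (1 - (u:ℂ)) ^ (c - a - 1)) := by
  obtain ⟨hu0, hu1⟩ := hu
  have hu_ne : (u:ℂ) ≠ 0 := by exact_mod_cast ne_of_gt hu0
  have harg : (u:ℂ).arg ≠ Real.pi := by
    rw [Complex.arg_ofReal_of_nonneg hu0.le]
    exact (Real.pi_ne_zero).symm
  have habs : |(-(u^2)⁻¹ : ℝ)| = (u^2)⁻¹ := by
    rw [abs_neg, abs_inv, abs_of_pos (by positivity)]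
  have hcast : ((u⁻¹:ℝ):ℂ) = ((u:ℂ))⁻¹ := by push_cast; ring
  have hdiv : z / ((u:ℂ))⁻¹ = z * u := by field_simp
  have hpow1 : ((u:ℂ))⁻¹ ^ (-c) = (u:ℂ) ^ c := by
    rw [Complex.inv_cpow _ _ harg, ← Complex.cpow_neg, neg_neg]
  have hsub : ((u:ℂ))⁻¹ - 1 = (((1-u) * u⁻¹ : ℝ):ℂ) := by
    push_cast
    field_simp
  have hpow2 : ((((1-u) * u⁻¹ : ℝ):ℂ)) ^ (c - a - 1)
      = (1 - (u:ℂ)) ^ (c - a - 1) * (u:ℂ) ^ (-(c - a - 1)) := by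
    rw [Complex.ofReal_mul, Complex.mul_cpow_ofReal_nonneg (by linarith) (inv_nonneg.2 hu0.le)]
    congr 1
    · push_cast; ring_nf
    · rw [Complex.ofReal_inv, Complex.inv_cpow _ _ harg, ← Complex.cpow_neg]
  have hsq : (((u^2)⁻¹ : ℝ):ℂ) = (u:ℂ) ^ (-(2:ℂ)) := by
    rw [Complex.cpow_neg]
    push_cast
    congr 1
    exact_mod_cast (Complex.cpow_natCast (u:ℂ) 2).symm
  rw [habs, Complex.real_smul, hcast, hdiv, hpow1, hsub, hpow2, hsq]
  have hcollect : (u:ℂ) ^ (-(2:ℂ)) * ((u:ℂ) ^ c * (u:ℂ) ^ (-(c - a - 1)))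
      = (u:ℂ) ^ (a - 1) := by
    rw [← Complex.cpow_add _ _ hu_ne, ← Complex.cpow_add _ _ hu_ne]
    congr 1
    ring
  calc (u:ℂ) ^ (-(2:ℂ)) *
        (Complex.exp (z * u) * (u:ℂ) ^ c *
          ((1 - (u:ℂ)) ^ (c - a - 1) * (u:ℂ) ^ (-(c - a - 1))))
      = Complex.exp (z * u) *
          (((u:ℂ) ^ (-(2:ℂ)) * ((u:ℂ) ^ c * (u:ℂ) ^ (-(c - a - 1)))) *
            (1 - (u:ℂ)) ^ (c - a - 1)) := by ring
    _ = Complex.exp (z * u) * ((u:ℂ) ^ (a - 1) * (1 - (u:ℂ)) ^ (c - a - 1)) := by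
        rw [hcollect]

/-- integral representation of the confluent function: for
`Re a > 0`, `Re (c-a) > 0`, the integral `∫₁^∞ e^(z/t) t^(-c) (t-1)^(c-a-1) dt`
converges and equals `∑ Γ(a+n) Γ(c-a) zⁿ / (Γ(c+n) n!)`; when `c` is not
a nonpositive integer it equals `(Γ(a)Γ(c-a)/Γ(c)) F(a;c;z)`. -/
theorem confluent_integral_representation (a c z : ℂ)
    (ha : 0 < a.re) (hca : 0 < (c - a).re) :
    IntegrableOn (fun t : ℝ =>
        Complex.exp (z / t) * (t : ℂ) ^ (-c) * ((t : ℂ) - 1) ^ (c - a - 1))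
      (Set.Ioi 1) ∧
    (∫ t in Set.Ioi (1 : ℝ),
        Complex.exp (z / t) * (t : ℂ) ^ (-c) * ((t : ℂ) - 1) ^ (c - a - 1))
      = ∑' n : ℕ, Complex.Gamma (a + n) * Complex.Gamma (c - a) * z ^ n /
          (Complex.Gamma (c + n) * (n.factorial : ℂ)) ∧
    ((∀ n : ℕ, c ≠ -(n : ℂ)) →
      (∫ t in Set.Ioi (1 : ℝ),
          Complex.exp (z / t) * (t : ℂ) ^ (-c) * ((t : ℂ) - 1) ^ (c - a - 1))
        = Complex.Gamma a * Complex.Gamma (c - a) / Complex.Gamma c *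
            ∑' n : ℕ, (ascPochhammer ℂ n).eval a * z ^ n /
              ((ascPochhammer ℂ n).eval c * (n.factorial : ℂ))) := by
  set g : ℝ → ℂ := fun t =>
    Complex.exp (z / t) * (t : ℂ) ^ (-c) * ((t : ℂ) - 1) ^ (c - a - 1) with hgdef
  have hderiv : ∀ u ∈ Set.Ioo (0:ℝ) 1,
      HasDerivWithinAt (fun y : ℝ => y⁻¹) (-(u^2)⁻¹) (Set.Ioo 0 1) u :=
    fun u hu => (hasDerivAt_inv (ne_of_gt hu.1)).hasDerivWithinAt
  have hinj : Set.InjOn (fun u : ℝ => u⁻¹) (Set.Ioo 0 1) :=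
    fun x _ y _ h => inv_injective h
  have h_iff := integrableOn_image_iff_integrableOn_abs_deriv_smul
    measurableSet_Ioo hderiv hinj g
  have h_int_eq := integral_image_eq_integral_abs_deriv_smul
    measurableSet_Ioo hderiv hinj g
  rw [image_inv_Ioo] at h_iff h_int_eq
  have hpt : ∀ u ∈ Set.Ioo (0:ℝ) 1, |(-(u^2)⁻¹)| • g ((fun y : ℝ => y⁻¹) u)
      = Complex.exp (z * u) * ((u:ℂ) ^ (a - 1) * (1 - (u:ℂ)) ^ (c - a - 1)) := by
    intro u hu
    simpa [hgdef] using subst_pointwise a c z u hu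
  obtain ⟨hEI, hEV⟩ := euler_integral a c z ha hca
  have hInt : IntegrableOn g (Set.Ioi 1) := by
    rw [h_iff]
    exact hEI.congr_fun (fun u hu => (hpt u hu).symm) measurableSet_Ioo
  have hval : (∫ t in Set.Ioi (1:ℝ), g t)
      = ∑' n : ℕ, Complex.Gamma (a + n) * Complex.Gamma (c - a) * z ^ n /
          (Complex.Gamma (c + n) * (n.factorial : ℂ)) := by
    rw [h_int_eq, ← hEV]
    exact setIntegral_congr_fun measurableSet_Ioo hpt
  refine ⟨hInt, hval, ?_⟩
  intro hcn
  have hcne : ∀ k : ℕ, c + k ≠ 0 := by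
    intro k h
    exact hcn k (eq_neg_of_add_eq_zero_left h)
  have hane : ∀ k : ℕ, a + k ≠ 0 := by
    intro k h
    have h2 : (a + (k:ℂ)).re = 0 := by rw [h]; simp
    rw [add_re, natCast_re] at h2
    have : (0:ℝ) ≤ k := k.cast_nonneg
    linarith
  rw [hval, ← tsum_mul_left]
  apply tsum_congr
  intro n
  rw [gamma_pochhammer a hane n, gamma_pochhammer c hcne n]
  have hΓc : Complex.Gamma c ≠ 0 := Complex.Gamma_ne_zero (fun m => hcn m)
  have hpc : (ascPochhammer ℂ n).eval c ≠ 0 := pochhammer_ne_zero c hcne n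
  have hfac : ((n.factorial : ℂ)) ≠ 0 := by exact_mod_cast n.factorial_ne_zero
  field_simp
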